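/- Let X = (I,P) be a probabilistic coherence space and let t : Mfin(I) → [0,∞) satisfy Σ_μ t_μ x^μ ≤ 1 for all x ∈ P. Let p ∈ [0,1) and let x ∈ P with ‖x‖_X ≤ p. Then (1−p)·Dt(x) ∈ P⊥, i.e. for every u ∈ P one has (1−p)·Σ_{a∈I} Dt(x)_a u_a ≤ 1, where Dt(x)_a = Σ_{μ∈Mfin(I)} (μ(a)+1) t_{μ+[a]} x^μ. -/

import Mathlib

open scoped ENNReal NNReal

noncomputable section

/-- ⟨u,u'⟩ = Σ_i u_i u'_i in [0,∞]. -/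
def dotE {I : Type*} (u v : I → ℝ≥0∞) : ℝ≥0∞ := ∑' i, u i * v i

/-- The orthogonal P⊥ of a set P ⊆ [0,∞]^I. -/
def orthE {I : Type*} (P : Set (I → ℝ≥0∞)) : Set (I → ℝ≥0∞) :=
  {v | ∀ u ∈ P, dotE u v ≤ 1}

/-- (I,P) is a probabilistic coherence space. -/
structure IsPCS {I : Type*} (P : Set (I → ℝ≥0∞)) : Prop where
  biorth : orthE (orthE P) = P
  nonzero : ∀ a, ∃ x ∈ P, 0 < x a
  bounded : ∀ a, ∃ m : ℝ≥0, ∀ x ∈ P, x a ≤ (m : ℝ≥0∞)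

/-- The norm ‖x‖_X = inf{r > 0 | x ∈ rP}. -/
def pnorm {I : Type*} (P : Set (I → ℝ≥0∞)) (x : I → ℝ≥0∞) : ℝ≥0∞ :=
  sInf {r : ℝ≥0∞ | 0 < r ∧ ∃ z ∈ P, x = r • z}

/-- x^μ = Π_{a∈I} x_a^{μ(a)}. -/
def mpow {I : Type*} (x : I → ℝ≥0∞) (μ : Multiset I) : ℝ≥0∞ := (μ.map x).prod

/-- The derivative Dt(x)_a = Σ_μ (μ(a)+1) t_{μ+[a]} x^μ of a scalar power series. -/
def matDeriv1 {I : Type*} [DecidableEq I] (t : Multiset I → ℝ≥0∞)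
    (x : I → ℝ≥0∞) : I → ℝ≥0∞ :=
  fun a => ∑' μ : Multiset I, ((μ.count a : ℝ≥0∞) + 1) * t (μ + {a}) * mpow x μ

namespace Stmt9Aux

variable {I : Type*}

lemma dotE_comm (u v : I → ℝ≥0∞) : dotE u v = dotE v u := by
  simp [dotE, mul_comm]

lemma mem_of_le {P : Set (I → ℝ≥0∞)} (hP : IsPCS P) {y w : I → ℝ≥0∞}
    (hle : ∀ i, y i ≤ w i) (hw : w ∈ P) : y ∈ P := by
  rw [← hP.biorth]
  intro v hv
  calc dotE v y ≤ dotE v w := ENNReal.tsum_le_tsum fun i => mul_le_mul_right (hle i) _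
    _ = dotE w v := dotE_comm _ _
    _ ≤ 1 := hv w hw

lemma conv_mem {P : Set (I → ℝ≥0∞)} (hP : IsPCS P) {z u : I → ℝ≥0∞} {s s' : ℝ≥0∞}
    (hz : z ∈ P) (hu : u ∈ P) (hs : s + s' = 1) :
    (fun i => s * z i + s' * u i) ∈ P := by
  rw [← hP.biorth]
  intro v hv
  have hv' : dotE v (fun i => s * z i + s' * u i) = s * dotE v z + s' * dotE v u := by
    rw [dotE, dotE, dotE, ← ENNReal.tsum_mul_left, ← ENNReal.tsum_mul_left,
      ← ENNReal.tsum_add]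
    congr 1; funext i; ring
  rw [hv']
  calc s * dotE v z + s' * dotE v u
      ≤ s * 1 + s' * 1 := by
        gcongr
        · rw [dotE_comm]; exact hv z hz
        · rw [dotE_comm]; exact hv u hu
    _ = 1 := by rw [mul_one, mul_one, hs]

/-- x^μ + Σ_a μ(a)·w_a·x^(μ−a) ≤ (x+w)^μ. -/
lemma mpow_add_le [DecidableEq I] (x w : I → ℝ≥0∞) (μ : Multiset I) :
    mpow x μ + (∑' a, (μ.count a : ℝ≥0∞) * w a * mpow x (μ.erase a))
      ≤ mpow (fun i => x i + w i) μ := by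
  induction μ using Multiset.induction with
  | empty => simp [mpow]
  | cons b ν ih =>
    have hS : (∑' a, (((b ::ₘ ν).count a : ℝ≥0∞)) * w a * mpow x ((b ::ₘ ν).erase a))
        = x b * (∑' a, ((ν.count a : ℝ≥0∞)) * w a * mpow x (ν.erase a))
          + w b * mpow x ν := by
      have hterm : ∀ a, (((b ::ₘ ν).count a : ℝ≥0∞)) * w a * mpow x ((b ::ₘ ν).erase a)
          = x b * (((ν.count a : ℝ≥0∞)) * w a * mpow x (ν.erase a))
            + (if a = b then w b * mpow x ν else 0) := by
        intro a
        rcases eq_or_ne a b with rfl | hab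
        · rw [Multiset.count_cons_self, Multiset.erase_cons_head, if_pos rfl]
          by_cases hbv : a ∈ ν
          · have hx : x a * mpow x (ν.erase a) = mpow x ν := by
              conv_rhs => rw [← Multiset.cons_erase hbv]
              simp [mpow]
            push_cast
            calc ((ν.count a : ℝ≥0∞) + 1) * w a * mpow x ν
                = (ν.count a : ℝ≥0∞) * w a * mpow x ν + w a * mpow x ν := by ring
              _ = x a * ((ν.count a : ℝ≥0∞) * w a * mpow x (ν.erase a))
                    + w a * mpow x ν := by rw [← hx]; ring
          · have h0 : ν.count a = 0 := Multiset.count_eq_zero_of_notMem hbv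
            have he : ν.erase a = ν := Multiset.erase_of_notMem hbv
            rw [h0, he]
            push_cast
            ring
        · rw [Multiset.count_cons_of_ne hab, Multiset.erase_cons_tail _ (Ne.symm hab),
            if_neg hab]
          have : mpow x (b ::ₘ ν.erase a) = x b * mpow x (ν.erase a) := by simp [mpow]
          rw [this]; ring
      calc (∑' a, (((b ::ₘ ν).count a : ℝ≥0∞)) * w a * mpow x ((b ::ₘ ν).erase a))
          = ∑' a, (x b * (((ν.count a : ℝ≥0∞)) * w a * mpow x (ν.erase a))
              + (if a = b then w b * mpow x ν else 0)) := by
            exact tsum_congr hterm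
        _ = x b * (∑' a, ((ν.count a : ℝ≥0∞)) * w a * mpow x (ν.erase a))
              + w b * mpow x ν := by
            rw [ENNReal.tsum_add, ENNReal.tsum_mul_left, tsum_ite_eq]
    have h1 : mpow (fun i => x i + w i) (b ::ₘ ν)
        = (x b + w b) * mpow (fun i => x i + w i) ν := by simp [mpow]
    have h2 : mpow x (b ::ₘ ν) = x b * mpow x ν := by simp [mpow]
    rw [h1, h2, hS]
    calc x b * mpow x ν
          + (x b * (∑' a, ((ν.count a : ℝ≥0∞)) * w a * mpow x (ν.erase a))
            + w b * mpow x ν)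
        ≤ (x b + w b) * (mpow x ν
            + (∑' a, ((ν.count a : ℝ≥0∞)) * w a * mpow x (ν.erase a))) := by
          have : (x b + w b) * (mpow x ν
              + (∑' a, ((ν.count a : ℝ≥0∞)) * w a * mpow x (ν.erase a)))
            = (x b * mpow x ν
              + (x b * (∑' a, ((ν.count a : ℝ≥0∞)) * w a * mpow x (ν.erase a))
                + w b * mpow x ν))
              + w b * (∑' a, ((ν.count a : ℝ≥0∞)) * w a * mpow x (ν.erase a)) := by
            ring
          rw [this]; exact le_self_add
      _ ≤ (x b + w b) * mpow (fun i => x i + w i) ν := mul_le_mul_right ih _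

lemma tsum_shift [DecidableEq I] (a : I) (f : Multiset I → ℝ≥0∞)
    (hf : ∀ μ, a ∉ μ → f μ = 0) :
    ∑' ν : Multiset I, f (ν + {a}) = ∑' μ, f μ := by
  apply Function.Injective.tsum_eq (g := fun ν : Multiset I => ν + {a})
  · intro ν ν' h
    simpa using h
  · intro μ hμ
    have ha : a ∈ μ := by
      by_contra hcon
      exact hμ (hf μ hcon)
    refine ⟨μ.erase a, ?_⟩
    show μ.erase a + {a} = μ
    rw [add_comm, Multiset.singleton_add, Multiset.cons_erase ha]

end Stmt9Aux

open Stmt9Aux in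
/-- If t : !X ⊸ 1 (i.e. Σ_μ t_μ x^μ ≤ 1 on P), p ∈ [0,1) and ‖x‖_X ≤ p, then
(1−p)·Dt(x) ∈ P⊥. -/
theorem stmt9 {I : Type*} [Countable I] [DecidableEq I]
    (P : Set (I → ℝ≥0∞)) (hP : IsPCS P)
    (t : Multiset I → ℝ≥0∞) (htfin : ∀ μ, t μ ≠ ⊤)
    (ht : ∀ x ∈ P, ∑' μ : Multiset I, t μ * mpow x μ ≤ 1)
    (p : ℝ≥0∞) (hp : p < 1)
    (x : I → ℝ≥0∞) (hx : x ∈ P) (hxp : pnorm P x ≤ p) :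
    (fun a => (1 - p) * matDeriv1 t x a) ∈ orthE P := by
  intro u hu
  set D : I → ℝ≥0∞ := matDeriv1 t x with hD
  set L : ℝ≥0∞ := ∑' a, u a * D a with hL
  have hdot : dotE u (fun a => (1 - p) * D a) = (1 - p) * L := by
    rw [dotE, hL, ← ENNReal.tsum_mul_left]
    congr 1; funext a; ring
  rw [hdot]
  -- main estimate
  have hq : ∀ q : ℝ≥0∞, 0 < q → q < 1 - p → q * L ≤ 1 := by
    intro q hq0 hq1
    have hq1' : q + p < 1 := lt_tsub_iff_right.mp hq1
    have hql1 : q < 1 := lt_of_le_of_lt le_self_add hq1'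
    have hpq : p < 1 - q := lt_tsub_iff_right.mpr (by rwa [add_comm] at hq1')
    obtain ⟨r, ⟨hr0, z, hz, hxz⟩, hrlt⟩ := sInf_lt_iff.mp (lt_of_le_of_lt hxp hpq)
    have hsum : (1 - q) + q = 1 := tsub_add_cancel_of_le hql1.le
    set y : I → ℝ≥0∞ := fun i => x i + q * u i with hy
    have hyP : y ∈ P := by
      apply mem_of_le hP (w := fun i => (1 - q) * z i + q * u i)
        (fun i => ?_) (conv_mem hP hz hu hsum)
      have : x i ≤ (1 - q) * z i := by
        rw [hxz]; exact mul_le_mul_left hrlt.le _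
      exact add_le_add_left this _
    -- lower bound on the series at y
    have key : q * L ≤ ∑' μ, t μ * mpow y μ := by
      have step1 : (∑' μ, t μ * (∑' a, ((μ.count a : ℝ≥0∞)) * (q * u a) * mpow x (μ.erase a)))
          ≤ ∑' μ, t μ * mpow y μ := by
        apply ENNReal.tsum_le_tsum
        intro μ
        apply mul_le_mul_right
        exact le_trans le_add_self (mpow_add_le x (fun i => q * u i) μ)
      have step2 : (∑' μ, t μ * (∑' a, ((μ.count a : ℝ≥0∞)) * (q * u a) * mpow x (μ.erase a)))
          = q * L := by
        have e1 : (∑' μ, t μ * (∑' a, ((μ.count a : ℝ≥0∞)) * (q * u a) * mpow x (μ.erase a)))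
            = ∑' (μ : Multiset I) (a : I),
                t μ * (((μ.count a : ℝ≥0∞)) * (q * u a) * mpow x (μ.erase a)) := by
          congr 1; funext μ; rw [ENNReal.tsum_mul_left]
        rw [e1, ENNReal.tsum_comm]
        have e2 : ∀ a : I, (∑' μ : Multiset I,
              t μ * (((μ.count a : ℝ≥0∞)) * (q * u a) * mpow x (μ.erase a)))
            = q * (u a * D a) := by
          intro a
          have hvan : ∀ μ : Multiset I, a ∉ μ →
              t μ * (((μ.count a : ℝ≥0∞)) * (q * u a) * mpow x (μ.erase a)) = 0 := by
            intro μ hμ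
            simp [Multiset.count_eq_zero_of_notMem hμ]
          rw [← tsum_shift a _ hvan]
          have e3 : ∀ ν : Multiset I,
              t (ν + {a}) * ((((ν + {a}).count a : ℝ≥0∞)) * (q * u a)
                * mpow x ((ν + {a}).erase a))
              = q * (u a * (((ν.count a : ℝ≥0∞) + 1) * t (ν + {a}) * mpow x ν)) := by
            intro ν
            have hc : ((ν + {a}).count a : ℝ≥0∞) = (ν.count a : ℝ≥0∞) + 1 := by
              rw [Multiset.count_add, Multiset.count_singleton_self]; push_cast; ring
            have he : (ν + {a}).erase a = ν := by
              rw [add_comm, Multiset.singleton_add, Multiset.erase_cons_head]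
            rw [hc, he]; ring
          rw [tsum_congr e3, ENNReal.tsum_mul_left, ENNReal.tsum_mul_left]
          rfl
        rw [tsum_congr e2, ENNReal.tsum_mul_left]
      rw [← step2]; exact step1
    exact key.trans (ht y hyP)
  -- limit argument: pass from q < 1 - p to 1 - p itself
  apply ENNReal.le_of_forall_lt_one_mul_le
  intro c hc
  by_cases hc0 : c = 0
  · simp [hc0]
  have h1p0 : 0 < 1 - p := tsub_pos_of_lt hp
  have h1pt : (1 : ℝ≥0∞) - p ≠ ⊤ := by
    exact ne_top_of_le_ne_top ENNReal.one_ne_top tsub_le_self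
  have hq0 : 0 < c * (1 - p) := by
    exact ENNReal.mul_pos hc0 h1p0.ne'
  have hqlt : c * (1 - p) < 1 - p := by
    calc c * (1 - p) < 1 * (1 - p) :=
          by rw [mul_comm c, mul_comm 1]; exact ENNReal.mul_lt_mul_right h1p0.ne' h1pt hc
      _ = 1 - p := one_mul _
  have := hq (c * (1 - p)) hq0 hqlt
  rwa [mul_assoc] at this
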